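/- Suppose M and N are nonempty and the composition M[N] is E-definable. Then M[N] is semantically ∅-rigid if and only if both M and N are semantically ∅-rigid, and M[N] is syntactically ∅-rigid if and only if both M and N are syntactically ∅-rigid. -/

import Mathlib

open FirstOrder Language Set

universe u v w

variable (L : FirstOrder.Language.{u, v}) (M : Type w) [L.Structure M]

/-- The definable closure of `A`: the set of `b` such that `{b}` is definable
with parameters from `A`. -/
def dcl (A : Set M) : Set M := {b : M | A.Definable₁ L ({b} : Set M)}

/-- `M` is semantically `A`-rigid if every automorphism fixing `A` pointwise is the identity. -/
def SemRigid (A : Set M) : Prop :=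
  ∀ f : M ≃[L] M, (∀ a ∈ A, f a = a) → ∀ x : M, f x = x

/-- `M` is syntactically `A`-rigid if `dcl(A) = M`. -/
def SyntRigid (A : Set M) : Prop := dcl L M A = Set.univ

/-- The ∀-semantic degree of rigidity. -/
noncomputable def degForallSem : ℕ∞ :=
  sInf {n : ℕ∞ | ∃ m : ℕ, n = m ∧ ∀ A : Finset M, A.card = m → SemRigid L M ↑A}

/-- The ∃-semantic degree of rigidity. -/
noncomputable def degExistsSem : ℕ∞ :=
  sInf {n : ℕ∞ | ∃ m : ℕ, n = m ∧ ∃ A : Finset M, A.card = m ∧ SemRigid L M ↑A}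

/-- The ∀-syntactic degree of rigidity. -/
noncomputable def degForallSynt : ℕ∞ :=
  sInf {n : ℕ∞ | ∃ m : ℕ, n = m ∧ ∀ A : Finset M, A.card = m → SyntRigid L M ↑A}

/-- The ∃-syntactic degree of rigidity. -/
noncomputable def degExistsSynt : ℕ∞ :=
  sInf {n : ℕ∞ | ∃ m : ℕ, n = m ∧ ∃ A : Finset M, A.card = m ∧ SyntRigid L M ↑A}

universe u₁ v₁ u₂ v₂ w₁ w₂

variable (LM : FirstOrder.Language.{u₁, v₁}) (LN : FirstOrder.Language.{u₂, v₂})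
  (S : Type w₁) (T : Type w₂) [LM.Structure S] [LN.Structure T]

/-- The composition `S[T]` of the structures `S` and `T`: the structure on `S × T` in
the (disjoint) union language `Σ_S ∪ Σ_T` where a relation symbol of `Σ_S` holds of a
tuple iff it holds of the tuple of first coordinates in `S`, and a relation symbol of
`Σ_T` holds of a tuple iff all first coordinates agree and it holds of the tuple of
second coordinates in `T`. -/
instance compStructure [LM.IsRelational] [LN.IsRelational] :
    (LM.sum LN).Structure (S × T) where
  funMap f _ := Sum.casesOn f (fun f₁ => isEmptyElim f₁) (fun f₂ => isEmptyElim f₂)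
  RelMap r x :=
    Sum.casesOn r
      (fun rS => Structure.RelMap rS (fun i => (x i).1))
      (fun rT => (∀ i j, (x i).1 = (x j).1) ∧ Structure.RelMap rT (fun i => (x i).2))

/-- The composition `S[T]` is `E`-definable if the equivalence relation identifying the
copies of `T` (equality of first coordinates) is definable without parameters. -/
def EDefinable [LM.IsRelational] [LN.IsRelational] : Prop :=
  (∅ : Set (S × T)).Definable (LM.sum LN) {x : Fin 2 → S × T | (x 0).1 = (x 1).1}

section Aux

/-- In a relational language, every term is a variable. -/
def varOf {L : Language} [L.IsRelational] {γ : Type*} (t : L.Term γ) : γ :=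
  match t with
  | .var v => v
  | .func f _ => isEmptyElim f

@[simp] lemma realize_varOf {L : Language} [L.IsRelational] {γ : Type*} {M : Type*}
    [L.Structure M] (t : L.Term γ) (v : γ → M) :
    t.realize v = v (varOf t) := by
  match t with
  | .var w => rfl
  | .func f _ => exact isEmptyElim f

@[simp] lemma varOf_var {L : Language} [L.IsRelational] {γ : Type*} (w : γ) :
    varOf (L := L) (Term.var w) = w := rfl

lemma mem_dcl_iff {L : Language} {M : Type*} [L.Structure M] {b : M} :
    b ∈ dcl L M (∅ : Set M) ↔
      ∃ φ : L.Formula (Fin 1), ∀ x : Fin 1 → M, φ.Realize x ↔ x 0 = b := by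
  have : b ∈ dcl L M (∅ : Set M) ↔ (∅ : Set M).Definable L {x : Fin 1 → M | x 0 ∈ ({b} : Set M)} :=
    Iff.rfl
  rw [this, Set.empty_definable_iff]
  constructor
  · rintro ⟨φ, h⟩
    refine ⟨φ, fun x => ?_⟩
    have := Set.ext_iff.1 h x
    simp only [Set.mem_setOf_eq, Set.mem_singleton_iff] at this
    exact this.symm
  · rintro ⟨φ, h⟩
    refine ⟨φ, ?_⟩
    ext x
    simp only [Set.mem_setOf_eq, Set.mem_singleton_iff, h x]

variable {LM : FirstOrder.Language.{u₁, v₁}} {LN : FirstOrder.Language.{u₂, v₂}}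
  {S : Type w₁} {T : Type w₂} [LM.Structure S] [LN.Structure T]
  [LM.IsRelational] [LN.IsRelational]

@[simp] lemma relMap_inl {n : ℕ} (r : LM.Relations n) (x : Fin n → S × T) :
    Structure.RelMap (L := LM.sum LN) (M := S × T) (Sum.inl r) x ↔
      Structure.RelMap r (fun i => (x i).1) := Iff.rfl

@[simp] lemma relMap_inr {n : ℕ} (r : LN.Relations n) (x : Fin n → S × T) :
    Structure.RelMap (L := LM.sum LN) (M := S × T) (Sum.inr r) x ↔
      (∀ i j, (x i).1 = (x j).1) ∧ Structure.RelMap r (fun i => (x i).2) := Iff.rfl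

section Decomp

variable {α : Type*}

/-- Realization of a finite union of rectangles. -/
def RealR {n : ℕ} (l : List (LM.BoundedFormula α n × LN.BoundedFormula α n))
    (v : α → S × T) (xs : Fin n → S × T) : Prop :=
  ∃ p ∈ l, p.1.Realize (fun i => (v i).1) (fun i => (xs i).1) ∧
    p.2.Realize (fun i => (v i).2) (fun i => (xs i).2)

variable (LM LN) in
/-- Intersection of two finite unions of rectangles. -/
def interR {n : ℕ} (l₁ l₂ : List (LM.BoundedFormula α n × LN.BoundedFormula α n)) :
    List (LM.BoundedFormula α n × LN.BoundedFormula α n) :=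
  (l₁ ×ˢ l₂).map fun q => (q.1.1 ⊓ q.2.1, q.1.2 ⊓ q.2.2)

variable (LM LN) in
/-- Complement of a finite union of rectangles. -/
def complR {n : ℕ} : List (LM.BoundedFormula α n × LN.BoundedFormula α n) →
    List (LM.BoundedFormula α n × LN.BoundedFormula α n)
  | [] => [(⊤, ⊤)]
  | p :: l => interR LM LN [(p.1.not, ⊤), (⊤, p.2.not)] (complR l)

variable (LM LN) in
/-- Existential projection of a finite union of rectangles. -/
def exR {n : ℕ} (l : List (LM.BoundedFormula α (n + 1) × LN.BoundedFormula α (n + 1))) :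
    List (LM.BoundedFormula α n × LN.BoundedFormula α n) :=
  l.map fun p => (p.1.ex, p.2.ex)

lemma realR_interR {n : ℕ} (l₁ l₂ : List (LM.BoundedFormula α n × LN.BoundedFormula α n))
    (v : α → S × T) (xs : Fin n → S × T) :
    RealR (interR LM LN l₁ l₂) v xs ↔ RealR l₁ v xs ∧ RealR l₂ v xs := by
  constructor
  · rintro ⟨p, hp, h1, h2⟩
    simp only [interR, List.mem_map] at hp
    obtain ⟨q, hq, rfl⟩ := hp
    rw [List.mem_product] at hq
    rw [BoundedFormula.realize_inf] at h1 h2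
    exact ⟨⟨q.1, hq.1, h1.1, h2.1⟩, ⟨q.2, hq.2, h1.2, h2.2⟩⟩
  · rintro ⟨⟨p₁, hp₁, h11, h12⟩, ⟨p₂, hp₂, h21, h22⟩⟩
    refine ⟨(p₁.1 ⊓ p₂.1, p₁.2 ⊓ p₂.2), ?_, ?_, ?_⟩
    · simp only [interR, List.mem_map]
      exact ⟨(p₁, p₂), List.mem_product.2 ⟨hp₁, hp₂⟩, rfl⟩
    · rw [BoundedFormula.realize_inf]; exact ⟨h11, h21⟩
    · rw [BoundedFormula.realize_inf]; exact ⟨h12, h22⟩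

lemma realR_complR {n : ℕ} (l : List (LM.BoundedFormula α n × LN.BoundedFormula α n))
    (v : α → S × T) (xs : Fin n → S × T) :
    RealR (complR LM LN l) v xs ↔ ¬ RealR l v xs := by
  induction l with
  | nil =>
    simp only [complR, RealR, List.mem_singleton, List.not_mem_nil, false_and, exists_false,
      not_false_iff, iff_true]
    exact ⟨(⊤, ⊤), rfl, by simp, by simp⟩
  | cons p l ih =>
    rw [complR, realR_interR, ih]
    constructor
    · rintro ⟨⟨q, hq, h1, h2⟩, hnl⟩
      rintro ⟨r, hr, hr1, hr2⟩
      rcases List.mem_cons.1 hr with rfl | hr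
      · simp only [List.mem_cons, List.mem_singleton, List.not_mem_nil, or_false] at hq
        rcases hq with rfl | rfl
        · rw [BoundedFormula.realize_not] at h1; exact h1 hr1
        · rw [BoundedFormula.realize_not] at h2; exact h2 hr2
      · exact hnl ⟨r, hr, hr1, hr2⟩
    · intro h
      constructor
      · by_cases h1 : p.1.Realize (fun i => (v i).1) (fun i => (xs i).1)
        · refine ⟨(⊤, p.2.not), by simp, by simp, ?_⟩
          rw [BoundedFormula.realize_not]
          intro h2
          exact h ⟨p, List.mem_cons_self, h1, h2⟩
        · exact ⟨(p.1.not, ⊤), by simp, by rwa [BoundedFormula.realize_not], by simp⟩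
      · rintro ⟨r, hr, hr1, hr2⟩
        exact h ⟨r, List.mem_cons_of_mem _ hr, hr1, hr2⟩

lemma realR_exR {n : ℕ} (l : List (LM.BoundedFormula α (n + 1) × LN.BoundedFormula α (n + 1)))
    (v : α → S × T) (xs : Fin n → S × T) :
    RealR (exR LM LN l) v xs ↔ ∃ q : S × T, RealR l v (Fin.snoc xs q) := by
  constructor
  · rintro ⟨p, hp, h1, h2⟩
    simp only [exR, List.mem_map] at hp
    obtain ⟨q, hq, rfl⟩ := hp
    rw [BoundedFormula.realize_ex] at h1 h2
    obtain ⟨s, hs⟩ := h1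
    obtain ⟨t, ht⟩ := h2
    refine ⟨(s, t), q, hq, ?_, ?_⟩
    · have : (fun i => ((Fin.snoc xs (s, t) : Fin (n+1) → S × T) i).1) =
        Fin.snoc (fun i => (xs i).1) s := by
        funext i
        refine Fin.lastCases ?_ (fun i => ?_) i <;> simp [Fin.snoc_castSucc]
      rwa [this]
    · have : (fun i => ((Fin.snoc xs (s, t) : Fin (n+1) → S × T) i).2) =
        Fin.snoc (fun i => (xs i).2) t := by
        funext i
        refine Fin.lastCases ?_ (fun i => ?_) i <;> simp [Fin.snoc_castSucc]
      rwa [this]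
  · rintro ⟨q, p, hp, h1, h2⟩
    refine ⟨(p.1.ex, p.2.ex), List.mem_map.2 ⟨p, hp, rfl⟩, ?_, ?_⟩
    · rw [BoundedFormula.realize_ex]
      refine ⟨q.1, ?_⟩
      have : (fun i => ((Fin.snoc xs q : Fin (n+1) → S × T) i).1) =
        Fin.snoc (fun i => (xs i).1) q.1 := by
        funext i
        refine Fin.lastCases ?_ (fun i => ?_) i <;> simp [Fin.snoc_castSucc]
      rwa [← this]
    · rw [BoundedFormula.realize_ex]
      refine ⟨q.2, ?_⟩
      have : (fun i => ((Fin.snoc xs q : Fin (n+1) → S × T) i).2) =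
        Fin.snoc (fun i => (xs i).2) q.2 := by
        funext i
        refine Fin.lastCases ?_ (fun i => ?_) i <;> simp [Fin.snoc_castSucc]
      rwa [← this]

lemma sum_elim_fst {n : ℕ} (v : α → S × T) (xs : Fin n → S × T) (w : α ⊕ Fin n) :
    Sum.elim (fun i => (v i).1) (fun i => (xs i).1) w = (Sum.elim v xs w).1 := by
  cases w <;> rfl

lemma sum_elim_snd {n : ℕ} (v : α → S × T) (xs : Fin n → S × T) (w : α ⊕ Fin n) :
    Sum.elim (fun i => (v i).2) (fun i => (xs i).2) w = (Sum.elim v xs w).2 := by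
  cases w <;> rfl

/-- The decomposition (Feferman–Vaught style) lemma: every formula of the sum language,
realized in the composition, is equivalent to a finite union of rectangles. -/
lemma decomp : ∀ {n : ℕ} (φ : (LM.sum LN).BoundedFormula α n),
    ∃ l : List (LM.BoundedFormula α n × LN.BoundedFormula α n),
      ∀ (v : α → S × T) (xs : Fin n → S × T), φ.Realize v xs ↔ RealR l v xs := by
  intro n φ
  induction φ with
  | falsum =>
    refine ⟨[], fun v xs => ?_⟩
    simp [RealR, BoundedFormula.Realize]
  | equal t₁ t₂ =>
    refine ⟨[(.equal (.var (varOf t₁)) (.var (varOf t₂)),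
             .equal (.var (varOf t₁)) (.var (varOf t₂)))], fun v xs => ?_⟩
    have hL : (BoundedFormula.equal t₁ t₂).Realize v xs ↔
        Sum.elim v xs (varOf t₁) = Sum.elim v xs (varOf t₂) := by
      simp [BoundedFormula.Realize]
    rw [hL]
    constructor
    · intro h
      refine ⟨_, List.mem_singleton_self _, ?_, ?_⟩ <;>
        simp [BoundedFormula.Realize, varOf_var, sum_elim_fst, sum_elim_snd, h]
    · rintro ⟨p, hp, h1, h2⟩
      rw [List.mem_singleton] at hp
      subst hp
      simp only [BoundedFormula.Realize, Term.realize, realize_varOf,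
        sum_elim_fst, sum_elim_snd] at h1 h2
      exact Prod.ext h1 h2
  | @rel n k R ts =>
    rcases R with rS | rT
    · refine ⟨[(.rel rS (fun j => .var (varOf (ts j))), ⊤)], fun v xs => ?_⟩
      have hL : (BoundedFormula.rel (Sum.inl rS) ts).Realize v xs ↔
          Structure.RelMap rS (fun j => (Sum.elim v xs (varOf (ts j))).1) := by
        simp only [BoundedFormula.Realize, realize_varOf]
        exact relMap_inl _ _
      rw [hL]
      constructor
      · intro h
        refine ⟨_, List.mem_singleton_self _, ?_, by simp⟩
        simp only [BoundedFormula.Realize, realize_varOf, varOf_var, sum_elim_fst]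
        exact h
      · rintro ⟨p, hp, h1, _⟩
        rw [List.mem_singleton] at hp
        subst hp
        simp only [BoundedFormula.Realize, realize_varOf, varOf_var, sum_elim_fst] at h1
        exact h1
    · refine ⟨[(BoundedFormula.iInf
          (fun q : Fin k × Fin k => .equal (.var (varOf (ts q.1))) (.var (varOf (ts q.2)))),
          .rel rT (fun j => .var (varOf (ts j))))], fun v xs => ?_⟩
      have hL : (BoundedFormula.rel (Sum.inr rT) ts).Realize v xs ↔
          (∀ i j, (Sum.elim v xs (varOf (ts i))).1 = (Sum.elim v xs (varOf (ts j))).1) ∧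
            Structure.RelMap rT (fun j => (Sum.elim v xs (varOf (ts j))).2) := by
        simp only [BoundedFormula.Realize, realize_varOf]
        exact relMap_inr _ _
      rw [hL]
      constructor
      · rintro ⟨h1, h2⟩
        refine ⟨_, List.mem_singleton_self _, ?_, ?_⟩
        · rw [BoundedFormula.realize_iInf]
          rintro ⟨i, j⟩
          simp only [BoundedFormula.Realize, Term.realize, realize_varOf, varOf_var, sum_elim_fst]
          exact h1 i j
        · simp only [BoundedFormula.Realize, realize_varOf, varOf_var, sum_elim_snd]
          exact h2
      · rintro ⟨p, hp, h1, h2⟩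
        rw [List.mem_singleton] at hp
        subst hp
        rw [BoundedFormula.realize_iInf] at h1
        simp only [BoundedFormula.Realize, Term.realize, realize_varOf, varOf_var] at h1 h2
        constructor
        · intro i j
          have := h1 (i, j)
          rwa [sum_elim_fst, sum_elim_fst] at this
        · simp only [varOf_var, sum_elim_snd] at h2
          exact h2
  | imp φ ψ ihφ ihψ =>
    obtain ⟨l₁, h₁⟩ := ihφ
    obtain ⟨l₂, h₂⟩ := ihψ
    refine ⟨complR LM LN l₁ ++ l₂, fun v xs => ?_⟩
    rw [BoundedFormula.realize_imp, h₁, h₂]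
    constructor
    · intro h
      by_cases hc : RealR l₁ v xs
      · obtain ⟨p, hp, h1, h2⟩ := h hc
        exact ⟨p, List.mem_append_right _ hp, h1, h2⟩
      · obtain ⟨p, hp, h1, h2⟩ := (realR_complR l₁ v xs).2 hc
        exact ⟨p, List.mem_append_left _ hp, h1, h2⟩
    · rintro ⟨p, hp, h1, h2⟩ hl₁
      rcases List.mem_append.1 hp with hp | hp
      · exact absurd hl₁ ((realR_complR l₁ v xs).1 ⟨p, hp, h1, h2⟩)
      · exact ⟨p, hp, h1, h2⟩
  | all φ ih =>
    obtain ⟨l, h⟩ := ih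
    refine ⟨complR LM LN (exR LM LN (complR LM LN l)), fun v xs => ?_⟩
    rw [BoundedFormula.realize_all, realR_complR, realR_exR]
    simp only [realR_complR]
    push_neg
    exact forall_congr' fun q => h v _

end Decomp

lemma realize_zero_congr {L : Language} {M : Type*} [L.Structure M] {β : Type*}
    (φ : L.BoundedFormula β 0) (v : β → M) (w w' : Fin 0 → M) :
    φ.Realize v w ↔ φ.Realize v w' := by
  rw [show w = w' from funext fun i => i.elim0]

section Translate

variable (LM LN) in
/-- Lift of an `LM`-formula to the sum language, replacing equalities by the `E`-formula. -/
def liftMF (ε : (LM.sum LN).Formula (Fin 2)) :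
    ∀ {n : ℕ}, LM.BoundedFormula (Fin 1) n → (LM.sum LN).BoundedFormula (Fin 1) n
  | _, .falsum => .falsum
  | _, .equal t₁ t₂ => BoundedFormula.relabel ![varOf t₁, varOf t₂] ε
  | _, .rel R ts => .rel (Sum.inl R) fun i => .var (varOf (ts i))
  | _, .imp f g => .imp (liftMF ε f) (liftMF ε g)
  | _, .all f => .all (liftMF ε f)

variable (LM LN) in
/-- Relativization of an `LN`-formula to the `E`-class of the (unique) free variable. -/
def relAt (ε : (LM.sum LN).Formula (Fin 2)) :
    ∀ {n : ℕ}, LN.BoundedFormula (Fin 1) n → (LM.sum LN).BoundedFormula (Fin 1) n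
  | _, .falsum => .falsum
  | _, .equal t₁ t₂ => .equal (.var (varOf t₁)) (.var (varOf t₂))
  | _, .rel R ts => .rel (Sum.inr R) fun i => .var (varOf (ts i))
  | _, .imp f g => .imp (relAt ε f) (relAt ε g)
  | n, .all f =>
      .all ((BoundedFormula.relabel ![Sum.inr (Fin.last n), Sum.inl 0] ε).imp (relAt ε f))

variable {ε : (LM.sum LN).Formula (Fin 2)}
  (hε : ∀ x : Fin 2 → S × T, ε.Realize x ↔ (x 0).1 = (x 1).1)

include hε in
lemma realize_epsRel {n : ℕ} (g : Fin 2 → Fin 1 ⊕ Fin n) (v : Fin 1 → S × T)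
    (xs : Fin n → S × T) :
    (BoundedFormula.relabel g ε).Realize v xs ↔
      (Sum.elim v xs (g 0)).1 = (Sum.elim v xs (g 1)).1 := by
  rw [BoundedFormula.realize_relabel]
  have hxs : (Sum.elim v (xs ∘ Fin.castAdd 0) ∘ g) = Sum.elim v xs ∘ g := rfl
  rw [hxs]
  exact (realize_zero_congr ε _ _ default).trans (hε (Sum.elim v xs ∘ g))

lemma fst_snoc {n : ℕ} (xs : Fin n → S × T) (q : S × T) :
    (fun i => ((Fin.snoc xs q : Fin (n + 1) → S × T) i).1) =
      Fin.snoc (fun i => (xs i).1) q.1 := by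
  funext i
  refine Fin.lastCases ?_ (fun i => ?_) i <;> simp [Fin.snoc_castSucc]

lemma snd_snoc {n : ℕ} (xs : Fin n → S × T) (q : S × T) :
    (fun i => ((Fin.snoc xs q : Fin (n + 1) → S × T) i).2) =
      Fin.snoc (fun i => (xs i).2) q.2 := by
  funext i
  refine Fin.lastCases ?_ (fun i => ?_) i <;> simp [Fin.snoc_castSucc]

include hε in
lemma realize_liftMF [Nonempty T] :
    ∀ {n : ℕ} (φ : LM.BoundedFormula (Fin 1) n) (v : Fin 1 → S × T) (xs : Fin n → S × T),
      (liftMF LM LN ε φ).Realize v xs ↔ φ.Realize (fun i => (v i).1) (fun i => (xs i).1) := by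
  intro n φ
  induction φ with
  | falsum =>
    intro v xs
    simp [liftMF, BoundedFormula.Realize]
  | equal t₁ t₂ =>
    intro v xs
    rw [show liftMF LM LN ε (.equal t₁ t₂) = BoundedFormula.relabel ![varOf t₁, varOf t₂] ε
      from rfl, realize_epsRel hε]
    simp only [BoundedFormula.Realize, Term.realize, realize_varOf, sum_elim_fst,
      Matrix.cons_val_zero, Matrix.cons_val_one, Matrix.head_cons]
  | rel R ts =>
    intro v xs
    rw [show liftMF LM LN ε (.rel R ts) = .rel (Sum.inl R) (fun i => .var (varOf (ts i)))
      from rfl]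
    simp only [BoundedFormula.Realize, Term.realize, realize_varOf, varOf_var, relMap_inl,
      sum_elim_fst]
  | imp f g ihf ihg =>
    intro v xs
    rw [show liftMF LM LN ε (f.imp g) = (liftMF LM LN ε f).imp (liftMF LM LN ε g) from rfl]
    rw [BoundedFormula.realize_imp, BoundedFormula.realize_imp, ihf, ihg]
  | all f ih =>
    intro v xs
    rw [show liftMF LM LN ε f.all = (liftMF LM LN ε f).all from rfl]
    rw [BoundedFormula.realize_all, BoundedFormula.realize_all]
    constructor
    · intro h s
      have := (ih v (Fin.snoc xs (s, Classical.arbitrary T))).1 (h _)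
      rwa [fst_snoc] at this
    · intro h q
      rw [ih, fst_snoc]
      exact h q.1

include hε in
lemma realize_relAt :
    ∀ {n : ℕ} (φ : LN.BoundedFormula (Fin 1) n) (a : S) (t₀ : T) (xs : Fin n → S × T),
      (∀ i, (xs i).1 = a) →
      ((relAt LM LN ε φ).Realize (fun _ => (a, t₀)) xs ↔
        φ.Realize (fun _ => t₀) (fun i => (xs i).2)) := by
  intro n φ
  induction φ with
  | falsum =>
    intro a t₀ xs hxs
    simp [relAt, BoundedFormula.Realize]
  | @equal m t₁ t₂ =>
    intro a t₀ xs hxs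
    rw [show relAt LM LN ε (.equal t₁ t₂) =
      BoundedFormula.equal (L := LM.sum LN) (.var (varOf t₁)) (.var (varOf t₂)) from rfl]
    simp only [BoundedFormula.Realize, Term.realize, realize_varOf, varOf_var]
    have hfst : ∀ w : Fin 1 ⊕ Fin m,
        (Sum.elim (fun _ => ((a, t₀) : S × T)) xs w).1 = a := by
      rintro (i | j)
      · rfl
      · exact hxs j
    have hsnd : ∀ w : Fin 1 ⊕ Fin m,
        Sum.elim (fun _ => t₀) (fun i => (xs i).2) w =
          (Sum.elim (fun _ => ((a, t₀) : S × T)) xs w).2 := by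
      rintro (i | j) <;> rfl
    rw [hsnd, hsnd]
    constructor
    · intro h
      exact congrArg Prod.snd h
    · intro h
      exact Prod.ext (by rw [hfst, hfst]) h
  | @rel m k R ts =>
    intro a t₀ xs hxs
    rw [show relAt LM LN ε (.rel R ts) =
      BoundedFormula.rel (L := LM.sum LN) (Sum.inr R) (fun i => .var (varOf (ts i))) from rfl]
    simp only [BoundedFormula.Realize, Term.realize, realize_varOf, varOf_var, relMap_inr]
    have hfst : ∀ w : Fin 1 ⊕ Fin m,
        (Sum.elim (fun _ => ((a, t₀) : S × T)) xs w).1 = a := by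
      rintro (i | j)
      · rfl
      · exact hxs j
    have hsnd : ∀ w : Fin 1 ⊕ Fin m,
        Sum.elim (fun _ => t₀) (fun i => (xs i).2) w =
          (Sum.elim (fun _ => ((a, t₀) : S × T)) xs w).2 := by
      rintro (i | j) <;> rfl
    constructor
    · rintro ⟨-, h⟩
      convert h using 2 with j
      exact hsnd _
    · intro h
      refine ⟨fun i j => by rw [hfst, hfst], ?_⟩
      convert h using 2 with j
      exact (hsnd _).symm
  | imp f g ihf ihg =>
    intro a t₀ xs hxs
    rw [show relAt LM LN ε (f.imp g) = (relAt LM LN ε f).imp (relAt LM LN ε g) from rfl]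
    rw [BoundedFormula.realize_imp, BoundedFormula.realize_imp, ihf a t₀ xs hxs,
      ihg a t₀ xs hxs]
  | @all n f ih =>
    intro a t₀ xs hxs
    rw [show relAt LM LN ε f.all =
      ((BoundedFormula.relabel ![Sum.inr (Fin.last n), Sum.inl 0] ε).imp
        (relAt LM LN ε f)).all from rfl]
    rw [BoundedFormula.realize_all, BoundedFormula.realize_all]
    constructor
    · intro h t
      have hguard : ((Fin.snoc xs ((a, t) : S × T) : Fin (n + 1) → S × T) (Fin.last n)).1 =
          ((a, t₀) : S × T).1 := by
        rw [Fin.snoc_last]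
      have h1 := h (a, t)
      rw [BoundedFormula.realize_imp, realize_epsRel hε] at h1
      have h2 := h1 (by simp)
      have hconstr : ∀ i : Fin (n + 1),
          ((Fin.snoc xs ((a, t) : S × T) : Fin (n + 1) → S × T) i).1 = a := by
        intro i
        refine Fin.lastCases ?_ (fun i => ?_) i
        · rw [Fin.snoc_last]
        · rw [Fin.snoc_castSucc]; exact hxs i
      have h3 := (ih a t₀ _ hconstr).1 h2
      rwa [snd_snoc] at h3
    · intro h q
      rw [BoundedFormula.realize_imp, realize_epsRel hε]
      intro hguard
      simp only [Matrix.cons_val_zero, Matrix.cons_val_one, Matrix.head_cons, Sum.elim_inr,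
        Sum.elim_inl, Fin.snoc_last] at hguard
      have hconstr : ∀ i : Fin (n + 1),
          ((Fin.snoc xs q : Fin (n + 1) → S × T) i).1 = a := by
        intro i
        refine Fin.lastCases ?_ (fun i => ?_) i
        · rw [Fin.snoc_last]; exact hguard
        · rw [Fin.snoc_castSucc]; exact hxs i
      rw [ih a t₀ _ hconstr, snd_snoc]
      exact h q.2

end Translate

section Main

lemma semS [Nonempty T] (hST : SemRigid (LM.sum LN) (S × T) (∅ : Set (S × T))) :
    SemRigid LM S (∅ : Set S) := by
  intro g _ a
  let F : (S × T) ≃[LM.sum LN] (S × T) :=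
    { toEquiv := g.toEquiv.prodCongr (Equiv.refl T)
      map_fun' := fun f _ => isEmptyElim f
      map_rel' := by
        rintro n (rS | rT) x
        · exact StrongHomClass.map_rel g rS (fun i => (x i).1)
        · refine and_congr (forall_congr' fun i => forall_congr' fun j => ?_) Iff.rfl
          exact g.injective.eq_iff }
  have key := hST F (fun a ha => absurd ha (Set.notMem_empty a)) (a, Classical.arbitrary T)
  exact congrArg Prod.fst key

lemma semT [Nonempty S] (hST : SemRigid (LM.sum LN) (S × T) (∅ : Set (S × T))) :
    SemRigid LN T (∅ : Set T) := by
  intro h _ t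
  let F : (S × T) ≃[LM.sum LN] (S × T) :=
    { toEquiv := (Equiv.refl S).prodCongr h.toEquiv
      map_fun' := fun f _ => isEmptyElim f
      map_rel' := by
        rintro n (rS | rT) x
        · exact Iff.rfl
        · exact and_congr Iff.rfl (StrongHomClass.map_rel h rT (fun i => (x i).2)) }
  have key := hST F (fun a ha => absurd ha (Set.notMem_empty a)) (Classical.arbitrary S, t)
  exact congrArg Prod.snd key

variable {ε : (LM.sum LN).Formula (Fin 2)}
  (hε : ∀ x : Fin 2 → S × T, ε.Realize x ↔ (x 0).1 = (x 1).1)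

include hε in
lemma semComp [Nonempty T] (hS : SemRigid LM S (∅ : Set S)) (hT : SemRigid LN T (∅ : Set T)) :
    SemRigid (LM.sum LN) (S × T) (∅ : Set (S × T)) := by
  intro f _ x
  have hEps : ∀ x y : S × T, (f x).1 = (f y).1 ↔ x.1 = y.1 := by
    intro x y
    have hcomp : (⇑f ∘ ![x, y]) = ![f x, f y] := by
      funext i
      fin_cases i <;> simp
    have h3 : ε.Realize ![f x, f y] ↔ ε.Realize ![x, y] := by
      rw [← hcomp]
      exact StrongHomClass.realize_formula f ε
    have h1 := hε ![x, y]
    have h2 := hε ![f x, f y]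
    simp only [Matrix.cons_val_zero, Matrix.cons_val_one, Matrix.head_cons] at h1 h2
    exact h2.symm.trans (h3.trans h1)
  set t₀ := Classical.arbitrary T with ht₀
  -- Step 1: the induced map on `S` is an automorphism, hence the identity.
  have hfstconst : ∀ (a : S) (t : T), (f (a, t)).1 = (f (a, t₀)).1 := fun a t =>
    (hEps _ _).2 rfl
  set g₀ : S → S := fun a => (f (a, t₀)).1 with hg₀
  have hinj : Function.Injective g₀ := fun a a' h => by
    have := (hEps (a, t₀) (a', t₀)).1 h
    exact this
  have hsurj : Function.Surjective g₀ := by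
    intro s
    refine ⟨(f.toEquiv.symm (s, t₀)).1, ?_⟩
    have hx : f (f.toEquiv.symm (s, t₀)) = (s, t₀) := f.toEquiv.apply_symm_apply _
    set x := f.toEquiv.symm (s, t₀)
    have : g₀ x.1 = (f (x.1, x.2)).1 := hfstconst x.1 x.2 ▸ rfl
    rw [this]
    have : ((x.1, x.2) : S × T) = x := rfl
    rw [this, hx]
  let gEquiv : S ≃[LM] S :=
    { toEquiv := Equiv.ofBijective g₀ ⟨hinj, hsurj⟩
      map_fun' := fun f _ => isEmptyElim f
      map_rel' := by
        intro n r xv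
        have := f.map_rel' (Sum.inl r) (fun i => (xv i, t₀))
        exact this }
  have hgid : ∀ a : S, g₀ a = a := fun a =>
    hS gEquiv (fun a ha => absurd ha (Set.notMem_empty a)) a
  have hfstid : ∀ y : S × T, (f y).1 = y.1 := by
    rintro ⟨a, t⟩
    rw [hfstconst a t]
    exact hgid a
  -- Step 2: for each `a`, the induced map on `T` is an automorphism, hence the identity.
  obtain ⟨a, t⟩ := x
  set h₀ : T → T := fun t => (f (a, t)).2 with hh₀
  have hfa : ∀ t : T, f (a, t) = (a, h₀ t) := fun t => Prod.ext (hfstid (a, t)) rfl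
  have hinjT : Function.Injective h₀ := by
    intro t t' h
    have : f (a, t) = f (a, t') := by rw [hfa, hfa, h]
    have := f.injective this
    exact congrArg Prod.snd this
  have hsurjT : Function.Surjective h₀ := by
    intro t'
    have hx : f (f.toEquiv.symm (a, t')) = (a, t') := f.toEquiv.apply_symm_apply _
    set x := f.toEquiv.symm (a, t') with hxdef
    have hx1 : x.1 = a := by
      have := hfstid x
      rw [hx] at this
      exact this.symm
    refine ⟨x.2, ?_⟩
    have : ((a, x.2) : S × T) = x := by rw [← hx1]
    have h2 : f (a, x.2) = (a, t') := by rw [this, hx]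
    have := congrArg Prod.snd h2
    exact this
  let hTequiv : T ≃[LN] T :=
    { toEquiv := Equiv.ofBijective h₀ ⟨hinjT, hsurjT⟩
      map_fun' := fun f _ => isEmptyElim f
      map_rel' := by
        intro n r xv
        have h1 := f.map_rel' (Sum.inr r) (fun i => (a, xv i))
        have hL : (f.toEquiv.toFun ∘ fun i => ((a, xv i) : S × T)) =
            fun i => ((a, h₀ (xv i)) : S × T) := by
          funext i
          exact hfa (xv i)
        rw [hL, relMap_inr, relMap_inr] at h1
        constructor
        · intro h
          exact (h1.1 ⟨fun i j => rfl, h⟩).2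
        · intro h
          exact (h1.2 ⟨fun i j => rfl, h⟩).2 }
  have hhid : ∀ t : T, h₀ t = t := fun t =>
    hT hTequiv (fun a ha => absurd ha (Set.notMem_empty a)) t
  rw [hfa t, hhid t]

lemma syntPoint [Nonempty S] [Nonempty T]
    (hST : SyntRigid (LM.sum LN) (S × T) (∅ : Set (S × T))) (a : S) (b : T) :
    a ∈ dcl LM S (∅ : Set S) ∧ b ∈ dcl LN T (∅ : Set T) := by
  have hab : (a, b) ∈ dcl (LM.sum LN) (S × T) (∅ : Set (S × T)) := by
    rw [hST]; trivial
  obtain ⟨φ, hφ⟩ := mem_dcl_iff.1 hab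
  obtain ⟨l, hl⟩ := decomp (S := S) (T := T) (α := Fin 1) (φ : (LM.sum LN).BoundedFormula (Fin 1) 0)
  have key : ∀ x : Fin 1 → S × T, x 0 = (a, b) ↔ RealR l x default := fun x =>
    (hφ x).symm.trans (hl x default)
  obtain ⟨p, hp, hα, hβ⟩ := (key (fun _ => (a, b))).1 rfl
  constructor
  · rw [mem_dcl_iff]
    refine ⟨p.1, fun y => ?_⟩
    constructor
    · intro hy
      have hR : RealR l (fun i => ((y i, b) : S × T)) default := by
        refine ⟨p, hp, ?_, ?_⟩
        · exact (realize_zero_congr _ _ _ _).1 hy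
        · exact (realize_zero_congr _ _ _ _).1 hβ
      have := (key (fun i => (y i, b))).2 hR
      exact congrArg Prod.fst this
    · intro hy
      have hyy : y = fun _ => a := funext fun i => by rw [Fin.eq_zero i]; exact hy
      subst hyy
      exact (realize_zero_congr _ _ _ _).1 hα
  · rw [mem_dcl_iff]
    refine ⟨p.2, fun y => ?_⟩
    constructor
    · intro hy
      have hR : RealR l (fun i => ((a, y i) : S × T)) default := by
        refine ⟨p, hp, ?_, ?_⟩
        · exact (realize_zero_congr _ _ _ _).1 hα
        · exact (realize_zero_congr _ _ _ _).1 hy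
      have := (key (fun i => (a, y i))).2 hR
      exact congrArg Prod.snd this
    · intro hy
      have hyy : y = fun _ => b := funext fun i => by rw [Fin.eq_zero i]; exact hy
      subst hyy
      exact (realize_zero_congr _ _ _ _).1 hβ

include hε in
lemma syntComp [Nonempty S] [Nonempty T]
    (hS : SyntRigid LM S (∅ : Set S)) (hT : SyntRigid LN T (∅ : Set T)) :
    SyntRigid (LM.sum LN) (S × T) (∅ : Set (S × T)) := by
  rw [SyntRigid, Set.eq_univ_iff_forall]
  rintro ⟨a, b⟩
  have ha : a ∈ dcl LM S (∅ : Set S) := by rw [hS]; trivial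
  have hb : b ∈ dcl LN T (∅ : Set T) := by rw [hT]; trivial
  obtain ⟨αf, hα⟩ := mem_dcl_iff.1 ha
  obtain ⟨βf, hβ⟩ := mem_dcl_iff.1 hb
  rw [mem_dcl_iff]
  refine ⟨(liftMF LM LN ε αf) ⊓ (relAt LM LN ε βf), fun x => ?_⟩
  rw [Formula.realize_inf]
  have h1 : Formula.Realize (liftMF LM LN ε αf) x ↔ (x 0).1 = a := by
    have hml := realize_liftMF hε αf x default
    have e1 : Formula.Realize (liftMF LM LN ε αf) x ↔ (liftMF LM LN ε αf).Realize x default :=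
      realize_zero_congr _ _ _ _
    have e2 : BoundedFormula.Realize αf (fun i => (x i).1)
        (fun i => ((default : Fin 0 → S × T) i).1) ↔
        Formula.Realize αf (fun i => (x i).1) := realize_zero_congr _ _ _ _
    rw [e1, hml, e2, hα]
  have h2 : Formula.Realize (relAt LM LN ε βf) x ↔ (x 0).2 = b := by
    have hx : x = fun _ => (((x 0).1, (x 0).2) : S × T) :=
      funext fun i => by rw [Fin.eq_zero i]
    rw [show Formula.Realize (relAt LM LN ε βf) x = BoundedFormula.Realize (relAt LM LN ε βf)
      (fun _ => (((x 0).1, (x 0).2) : S × T)) default from by rw [← hx]; rfl]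
    have hml := realize_relAt hε βf (x 0).1 (x 0).2 default (fun i => i.elim0)
    have e2 : BoundedFormula.Realize βf (fun _ => (x 0).2)
        (fun i => ((default : Fin 0 → S × T) i).2) ↔
        Formula.Realize βf (fun _ => (x 0).2) := realize_zero_congr _ _ _ _
    rw [hml, e2, hβ]
  rw [h1, h2]
  constructor
  · rintro ⟨hfst, hsnd⟩
    exact Prod.ext hfst hsnd
  · intro h
    exact ⟨congrArg Prod.fst h, congrArg Prod.snd h⟩

end Main

end Aux

/-- For nonempty `S`, `T` with `E`-definable composition, `S[T]` is semantically
(resp. syntactically) ∅-rigid iff both `S` and `T` are. -/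
theorem stmt_19 [LM.IsRelational] [LN.IsRelational] [Nonempty S] [Nonempty T]
    (hE : EDefinable LM LN S T) :
    (SemRigid (LM.sum LN) (S × T) (∅ : Set (S × T)) ↔
      SemRigid LM S (∅ : Set S) ∧ SemRigid LN T (∅ : Set T)) ∧
    (SyntRigid (LM.sum LN) (S × T) (∅ : Set (S × T)) ↔
      SyntRigid LM S (∅ : Set S) ∧ SyntRigid LN T (∅ : Set T)) := by
  obtain ⟨ε, hεset⟩ := Set.empty_definable_iff.1 hE
  have hε : ∀ x : Fin 2 → S × T, ε.Realize x ↔ (x 0).1 = (x 1).1 := by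
    intro x
    have := Set.ext_iff.1 hεset x
    simp only [Set.mem_setOf_eq] at this
    exact this.symm
  constructor
  · constructor
    · intro hST
      exact ⟨semS hST, semT hST⟩
    · rintro ⟨hS, hT⟩
      exact semComp hε hS hT
  · constructor
    · intro hST
      constructor
      · rw [SyntRigid, Set.eq_univ_iff_forall]
        intro a
        exact (syntPoint hST a (Classical.arbitrary T)).1
      · rw [SyntRigid, Set.eq_univ_iff_forall]
        intro b
        exact (syntPoint hST (Classical.arbitrary S) b).2
    · rintro ⟨hS, hT⟩
      exact syntComp hε hS hT
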